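/- Suppose Conditional parallel trends with respect to the never-treated holds for the two events. Then the combined event satisfies the single-event never-treated parallel trends: for every g ∈ {2,…,T} with P(G=g) > 0 and P(G=∞) > 0, and every t with g ≤ t ≤ T, E[Y_t(0,0) − Y_{t−1}(0,0) | X, G=g] = E[Y_t(0,0) − Y_{t−1}(0,0) | X, G=∞] almost surely. -/

import Mathlib

/- Two-event staggered Difference-in-Differences setup (Callaway–Sant'Anna with a
confounding event).  Cohorts take values in `{2,…,T} ∪ {∞} ⊆ ℕ∞`; the potential-outcome
index `0 : ℕ∞` codes "never treated by that event". -/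

open MeasureTheory ProbabilityTheory

noncomputable section

namespace TwoEventDiD

variable {Ω : Type*} [MeasurableSpace Ω]

/-- Expectation of `Z` conditional on the event `A`: `E[Z | A]`. -/
def cE (μ : Measure Ω) (A : Set Ω) (Z : Ω → ℝ) : ℝ := ∫ ω, Z ω ∂(μ[|A])

/-- Probability of `B` conditional on the event `A`: `P(B | A)`. -/
def cP (μ : Measure Ω) (A B : Set Ω) : ℝ := (μ[|A] B).toReal

/-- `g` lies in `{2,…,T} ∪ {∞}`. -/
def InCohort (T : ℕ) (g : ℕ∞) : Prop := g = ⊤ ∨ ((2 : ℕ∞) ≤ g ∧ g ≤ (T : ℕ∞))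

/-- Realized outcome `Y_t := Y_t(G¹,G²)`. -/
def Yr (G1 G2 : Ω → ℕ∞) (Y : ℕ → ℕ∞ → ℕ∞ → Ω → ℝ) (t : ℕ) : Ω → ℝ :=
  fun ω => Y t (G1 ω) (G2 ω) ω

/-- Double-group-time average treatment effect
`ATT(g¹,g²,t) = E[Y_t(g¹,g²) − Y_t(0,0) | G¹=g¹, G²=g²]`. -/
def ATT (μ : Measure Ω) (G1 G2 : Ω → ℕ∞) (Y : ℕ → ℕ∞ → ℕ∞ → Ω → ℝ)
    (g1 g2 : ℕ∞) (t : ℕ) : ℝ :=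
  cE μ {ω | G1 ω = g1 ∧ G2 ω = g2} fun ω => Y t g1 g2 ω - Y t 0 0 ω

/-- Target (event-1) treatment effect
`ATT¹(g¹,g²,t) = E[Y_t(g¹,0) − Y_t(0,0) | G¹=g¹, G²=g²]`. -/
def ATT1 (μ : Measure Ω) (G1 G2 : Ω → ℕ∞) (Y : ℕ → ℕ∞ → ℕ∞ → Ω → ℝ)
    (g1 g2 : ℕ∞) (t : ℕ) : ℝ :=
  cE μ {ω | G1 ω = g1 ∧ G2 ω = g2} fun ω => Y t g1 0 ω - Y t 0 0 ω

/-- Confounding (event-2) treatment effect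
`ATT²(g¹,g²,t) = E[Y_t(0,g²) − Y_t(0,0) | G¹=g¹, G²=g²]`. -/
def ATT2 (μ : Measure Ω) (G1 G2 : Ω → ℕ∞) (Y : ℕ → ℕ∞ → ℕ∞ → Ω → ℝ)
    (g1 g2 : ℕ∞) (t : ℕ) : ℝ :=
  cE μ {ω | G1 ω = g1 ∧ G2 ω = g2} fun ω => Y t 0 g2 ω - Y t 0 0 ω

/-- No Anticipation (unconditional version): before `max(g¹,g²)` the mean outcome of
cohort `(g¹,g²)` coincides with the appropriate less-treated potential outcome. -/
def NoAnticipation (μ : Measure Ω) (G1 G2 : Ω → ℕ∞) (Y : ℕ → ℕ∞ → ℕ∞ → Ω → ℝ)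
    (T : ℕ) : Prop :=
  ∀ g1 g2 : ℕ∞, InCohort T g1 → InCohort T g2 →
    0 < μ {ω | G1 ω = g1 ∧ G2 ω = g2} →
    ∀ t : ℕ, 1 ≤ t → (t : ℕ∞) < max g1 g2 →
      ((t : ℕ∞) < min g1 g2 →
        cE μ {ω | G1 ω = g1 ∧ G2 ω = g2} (Y t g1 g2)
          = cE μ {ω | G1 ω = g1 ∧ G2 ω = g2} (Y t 0 0)) ∧
      (g1 ≤ (t : ℕ∞) ∧ (t : ℕ∞) < g2 →
        cE μ {ω | G1 ω = g1 ∧ G2 ω = g2} (Y t g1 g2)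
          = cE μ {ω | G1 ω = g1 ∧ G2 ω = g2} (Y t g1 0)) ∧
      (g2 ≤ (t : ℕ∞) ∧ (t : ℕ∞) < g1 →
        cE μ {ω | G1 ω = g1 ∧ G2 ω = g2} (Y t g1 g2)
          = cE μ {ω | G1 ω = g1 ∧ G2 ω = g2} (Y t 0 g2))


/-- The σ-algebra `σ(X)` generated by the covariates. -/
def mX {K : ℕ} (X : Ω → Fin K → ℝ) : MeasurableSpace Ω :=
  MeasurableSpace.comap X inferInstance

/-- Conditional No Anticipation (conditional on covariates `X`). -/
def CondNoAnticipation (μ : Measure Ω) (G1 G2 : Ω → ℕ∞) (Y : ℕ → ℕ∞ → ℕ∞ → Ω → ℝ)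
    (T : ℕ) {K : ℕ} (X : Ω → Fin K → ℝ) : Prop :=
  ∀ g1 g2 : ℕ∞, InCohort T g1 → InCohort T g2 →
    0 < μ {ω | G1 ω = g1 ∧ G2 ω = g2} →
    ∀ t : ℕ, 1 ≤ t → (t : ℕ∞) < max g1 g2 →
      ((t : ℕ∞) < min g1 g2 →
        (μ[|{ω | G1 ω = g1 ∧ G2 ω = g2}])[Y t g1 g2 | mX X]
          =ᵐ[μ[|{ω | G1 ω = g1 ∧ G2 ω = g2}]]
        (μ[|{ω | G1 ω = g1 ∧ G2 ω = g2}])[Y t 0 0 | mX X]) ∧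
      (g1 ≤ (t : ℕ∞) ∧ (t : ℕ∞) < g2 →
        (μ[|{ω | G1 ω = g1 ∧ G2 ω = g2}])[Y t g1 g2 | mX X]
          =ᵐ[μ[|{ω | G1 ω = g1 ∧ G2 ω = g2}]]
        (μ[|{ω | G1 ω = g1 ∧ G2 ω = g2}])[Y t g1 0 | mX X]) ∧
      (g2 ≤ (t : ℕ∞) ∧ (t : ℕ∞) < g1 →
        (μ[|{ω | G1 ω = g1 ∧ G2 ω = g2}])[Y t g1 g2 | mX X]
          =ᵐ[μ[|{ω | G1 ω = g1 ∧ G2 ω = g2}]]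
        (μ[|{ω | G1 ω = g1 ∧ G2 ω = g2}])[Y t 0 g2 | mX X])

/-- Conditional parallel trends with respect to the never-treated: a common measurable
function of the covariates is a version of both conditional mean untreated trends. -/
def CondPTNever (μ : Measure Ω) (G1 G2 : Ω → ℕ∞) (Y : ℕ → ℕ∞ → ℕ∞ → Ω → ℝ)
    (T : ℕ) {K : ℕ} (X : Ω → Fin K → ℝ) : Prop :=
  ∀ g1 g2 : ℕ∞, InCohort T g1 → InCohort T g2 → ¬(g1 = ⊤ ∧ g2 = ⊤) →
    0 < μ {ω | G1 ω = g1 ∧ G2 ω = g2} →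
    0 < μ {ω | G1 ω = ⊤ ∧ G2 ω = ⊤} →
    ∀ t : ℕ, min g1 g2 ≤ (t : ℕ∞) → t ≤ T →
      ∃ h : (Fin K → ℝ) → ℝ, Measurable h ∧
        (fun ω => h (X ω))
          =ᵐ[μ[|{ω | G1 ω = g1 ∧ G2 ω = g2}]]
          (μ[|{ω | G1 ω = g1 ∧ G2 ω = g2}])[fun ω => Y t 0 0 ω - Y (t - 1) 0 0 ω | mX X] ∧
        (fun ω => h (X ω))
          =ᵐ[μ[|{ω | G1 ω = ⊤ ∧ G2 ω = ⊤}]]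
          (μ[|{ω | G1 ω = ⊤ ∧ G2 ω = ⊤}])[fun ω => Y t 0 0 ω - Y (t - 1) 0 0 ω | mX X]

/-- Conditional parallel trends with respect to the not-yet-treated. -/
def CondPTNyt (μ : Measure Ω) (G1 G2 : Ω → ℕ∞) (Y : ℕ → ℕ∞ → ℕ∞ → Ω → ℝ)
    (T : ℕ) {K : ℕ} (X : Ω → Fin K → ℝ) : Prop :=
  ∀ g1 g2 : ℕ∞, InCohort T g1 → InCohort T g2 → ¬(g1 = ⊤ ∧ g2 = ⊤) →
    0 < μ {ω | G1 ω = g1 ∧ G2 ω = g2} →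
    ∀ s t : ℕ, min g1 g2 ≤ (t : ℕ∞) → t ≤ s → s ≤ T →
      0 < μ {ω | ¬ G1 ω ≤ (s : ℕ∞) ∧ ¬ G2 ω ≤ (s : ℕ∞) ∧ G1 ω ≠ g1 ∧ G2 ω ≠ g2} →
      ∃ h : (Fin K → ℝ) → ℝ, Measurable h ∧
        (fun ω => h (X ω))
          =ᵐ[μ[|{ω | G1 ω = g1 ∧ G2 ω = g2}]]
          (μ[|{ω | G1 ω = g1 ∧ G2 ω = g2}])[fun ω => Y t 0 0 ω - Y (t - 1) 0 0 ω | mX X] ∧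
        (fun ω => h (X ω))
          =ᵐ[μ[|{ω | ¬ G1 ω ≤ (s : ℕ∞) ∧ ¬ G2 ω ≤ (s : ℕ∞) ∧ G1 ω ≠ g1 ∧ G2 ω ≠ g2}]]
          (μ[|{ω | ¬ G1 ω ≤ (s : ℕ∞) ∧ ¬ G2 ω ≤ (s : ℕ∞) ∧ G1 ω ≠ g1 ∧ G2 ω ≠ g2}])[
            fun ω => Y t 0 0 ω - Y (t - 1) 0 0 ω | mX X]

end TwoEventDiD

open TwoEventDiD

section AuxCombine
open MeasureTheory Filter Topology ProbabilityTheory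



section DD
lemma simpleFunc_factor {Ω α : Type*} [MeasurableSpace α] {X : Ω → α}
    (φ : @SimpleFunc Ω (MeasurableSpace.comap X inferInstance) ℝ) :
    ∃ H : α → ℝ, Measurable H ∧ ∀ ω, H (X ω) = φ ω := by
  classical
  letI : MeasurableSpace Ω := MeasurableSpace.comap X inferInstance
  have hfib : ∀ y : ℝ, ∃ S : Set α, MeasurableSet S ∧ X ⁻¹' S = φ ⁻¹' {y} := fun y =>
    φ.measurableSet_fiber y
  choose S hSmeas hSpre using hfib
  refine ⟨fun x => ∑ y ∈ φ.range, (S y).indicator (fun _ => y) x, ?_, ?_⟩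
  · exact Finset.measurable_sum _ fun y _ => (measurable_const.indicator (hSmeas y))
  · intro ω
    show ∑ y ∈ φ.range, (S y).indicator (fun _ => y) (X ω) = φ ω
    rw [Finset.sum_eq_single (φ ω)]
    · have : X ω ∈ S (φ ω) := by
        have : ω ∈ φ ⁻¹' {φ ω} := rfl
        rw [← hSpre] at this; exact this
      simp [Set.indicator_of_mem this]
    · intro y _ hy
      have : X ω ∉ S y := by
        intro hmem
        have h2 : ω ∈ φ ⁻¹' {y} := by rw [← hSpre]; exact hmem
        exact hy (show φ ω = y from h2).symm
      simp [Set.indicator_of_notMem this]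
    · intro hne; exact absurd (φ.mem_range_self ω) hne

lemma exists_factor_of_stronglyMeasurable_comap {Ω α : Type*} [MeasurableSpace α] {X : Ω → α}
    {f : Ω → ℝ} (hf : StronglyMeasurable[MeasurableSpace.comap X inferInstance] f) :
    ∃ h : α → ℝ, Measurable h ∧ f = fun ω => h (X ω) := by
  classical
  have hfac : ∀ n : ℕ, ∃ H : α → ℝ, Measurable H ∧ ∀ ω, H (X ω) = hf.approx n ω := fun n =>
    simpleFunc_factor (hf.approx n)
  choose H hHmeas hHfac using hfac
  set C : Set α := {x | ∃ c, Tendsto (fun n => H n x) atTop (𝓝 c)} with hC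
  have hCmeas : MeasurableSet C := measurableSet_exists_tendsto hHmeas
  set h : α → ℝ := fun x => if hx : ∃ c, Tendsto (fun n => H n x) atTop (𝓝 c)
    then hx.choose else 0 with hh
  have htend : ∀ x, Tendsto (fun n => if x ∈ C then H n x else 0) atTop (𝓝 (h x)) := by
    intro x
    by_cases hx : ∃ c, Tendsto (fun n => H n x) atTop (𝓝 c)
    · have hxC : x ∈ C := hx
      simp only [hxC, if_true, hh, dif_pos hx]
      exact hx.choose_spec
    · have hxC : x ∉ C := hx
      simp only [hxC, if_false, hh, dif_neg hx]
      exact tendsto_const_nhds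
  have hmeas : Measurable h := by
    refine measurable_of_tendsto_metrizable (f := fun n x => if x ∈ C then H n x else 0)
      (fun n => Measurable.ite hCmeas (hHmeas n) measurable_const) ?_
    rw [tendsto_pi_nhds]; exact htend
  refine ⟨h, hmeas, funext fun ω => ?_⟩
  have h1 : Tendsto (fun n => H n (X ω)) atTop (𝓝 (f ω)) := by
    simp only [hHfac]; exact hf.tendsto_approx ω
  have hx : X ω ∈ C := ⟨f ω, h1⟩
  have h2 : Tendsto (fun n => H n (X ω)) atTop (𝓝 (h (X ω))) := by
    have := htend (X ω); simpa only [hx, if_true] using this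
  exact tendsto_nhds_unique h1 h2
end DD

section Helpers

set_option linter.unusedSectionVars false
variable {Ω : Type*} [MeasurableSpace Ω] {μ : Measure Ω} [IsProbabilityMeasure μ]

lemma integrable_cond_of_integrable {Z : Ω → ℝ} (hZ : Integrable Z μ) (s : Set Ω)
    (hs : μ s ≠ 0) : Integrable Z (μ[|s]) := by
  rw [ProbabilityTheory.cond]
  exact (hZ.restrict).smul_measure (by simp [hs])

lemma cond_ae_mem {s : Set Ω} (hms : MeasurableSet s) : ∀ᵐ ω ∂(μ[|s]), ω ∈ s := by
  rw [ae_iff]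
  have : {ω | ¬ ω ∈ s} = sᶜ := rfl
  rw [this, cond_apply hms]
  simp

/-- integrability of an indicator under the conditional measure of a superset -/
lemma integrable_indicator_cond_of_cond {A U : Set Ω} (hA : MeasurableSet A) (hAU : A ⊆ U)
    (hU : μ U ≠ 0) (hA0 : μ A ≠ 0) {f : Ω → ℝ} (hf : Integrable f (μ[|A])) :
    Integrable (A.indicator f) (μ[|U]) := by
  rw [integrable_indicator_iff hA, IntegrableOn, ProbabilityTheory.cond,
    Measure.restrict_smul, Measure.restrict_restrict hA, Set.inter_eq_left.mpr hAU]
  rw [ProbabilityTheory.cond] at hf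
  have h1 : Integrable f (μ.restrict A) := by
    rw [integrable_smul_measure (by simp [measure_ne_top μ A]) (by simp [hA0])] at hf
    exact hf
  exact h1.smul_measure (by simp [hU])

lemma setIntegral_indicator_cond {A U : Set Ω} (hA : MeasurableSet A) (hAU : A ⊆ U)
    (hU : μ U ≠ 0) (hA0 : μ A ≠ 0) (f : Ω → ℝ) {s : Set Ω} (hs : MeasurableSet s) :
    ∫ x in s, (A.indicator f) x ∂(μ[|U])
      = ((μ U)⁻¹ * μ A).toReal * ∫ x in s, f x ∂(μ[|A]) := by
  rw [setIntegral_indicator hA]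
  rw [ProbabilityTheory.cond, ProbabilityTheory.cond, Measure.restrict_smul,
    Measure.restrict_smul, Measure.restrict_restrict hs, Measure.restrict_restrict (hs.inter hA),
    integral_smul_measure, integral_smul_measure]
  have h1 : s ∩ A ∩ U = s ∩ A := by
    rw [Set.inter_eq_left]; exact fun x hx => hAU hx.2
  rw [h1]
  simp only [smul_eq_mul, ENNReal.toReal_mul]
  have h3 : (μ A).toReal * (μ A)⁻¹.toReal = 1 := by
    rw [← ENNReal.toReal_mul, ENNReal.mul_inv_cancel hA0 (measure_ne_top μ A),
      ENNReal.toReal_one]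
  calc (μ U)⁻¹.toReal * ∫ x in s ∩ A, f x ∂μ
      = (μ U)⁻¹.toReal * ((μ A).toReal * (μ A)⁻¹.toReal) * ∫ x in s ∩ A, f x ∂μ := by
        rw [h3, mul_one]
    _ = (μ U)⁻¹.toReal * (μ A).toReal * ((μ A)⁻¹.toReal * ∫ x in s ∩ A, f x ∂μ) := by ring

end Helpers

section Key

set_option maxHeartbeats 1000000 in
lemma combine_PT {Ω α ι : Type*} [MeasurableSpace Ω] [MeasurableSpace α]
    (μ : Measure Ω) [IsProbabilityMeasure μ]
    (X : Ω → α) (hX : Measurable X)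
    (Z : Ω → ℝ) (hZ : Integrable Z μ)
    (I : Finset ι) (A : ι → Set Ω) (hAmeas : ∀ i, MeasurableSet (A i))
    (V : Set Ω) (hV : μ V ≠ 0)
    (U : Set Ω) (hUdef : U = ⋃ i ∈ I, A i) (hU : μ U ≠ 0)
    (hdisj : ∀ i ∈ I, ∀ j ∈ I, i ≠ j → Disjoint (A i) (A j))
    (hPT : ∀ i ∈ I, μ (A i) ≠ 0 → ∃ h : α → ℝ, Measurable h ∧
        ((fun ω => h (X ω)) =ᵐ[μ[|A i]]
          ((μ[|A i])[Z | MeasurableSpace.comap X inferInstance])) ∧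
        ((fun ω => h (X ω)) =ᵐ[μ[|V]]
          ((μ[|V])[Z | MeasurableSpace.comap X inferInstance]))) :
    ∃ h : α → ℝ, Measurable h ∧
      ((fun ω => h (X ω)) =ᵐ[μ[|U]]
        ((μ[|U])[Z | MeasurableSpace.comap X inferInstance])) ∧
      ((fun ω => h (X ω)) =ᵐ[μ[|V]]
        ((μ[|V])[Z | MeasurableSpace.comap X inferInstance])) := by
  classical
  have hm : MeasurableSpace.comap X inferInstance ≤ (inferInstance : MeasurableSpace Ω) :=
    hX.comap_le
  have hUmeas : MeasurableSet U := by
    rw [hUdef]; exact I.measurableSet_biUnion fun i _ => hAmeas i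
  set ν : Measure Ω := μ[|U] with hνdef
  set νV : Measure Ω := μ[|V] with hνVdef
  haveI : IsProbabilityMeasure ν := cond_isProbabilityMeasure hU
  haveI : IsProbabilityMeasure νV := cond_isProbabilityMeasure hV
  have hνA : ∀ i, μ (A i) = 0 → ν (A i) = 0 := by
    intro i hi
    rw [hνdef, cond_apply hUmeas]
    have h0 : μ (U ∩ A i) = 0 := measure_mono_null Set.inter_subset_right hi
    rw [h0, mul_zero]
  have hAU : ∀ i ∈ I, A i ⊆ U := fun i hi => hUdef ▸ Set.subset_biUnion_of_mem hi
  have hZν : Integrable Z ν := integrable_cond_of_integrable hZ U hU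
  obtain ⟨φU, hφU, hφUeq⟩ := exists_factor_of_stronglyMeasurable_comap (X := X)
    (stronglyMeasurable_condExp (μ := ν) (f := Z) (m := MeasurableSpace.comap X inferInstance))
  obtain ⟨φV, hφV, hφVeq⟩ := exists_factor_of_stronglyMeasurable_comap (X := X)
    (stronglyMeasurable_condExp (μ := νV) (f := Z) (m := MeasurableSpace.comap X inferInstance))
  have hwex : ∀ i : ι, ∃ p : α → ℝ, Measurable p ∧
      ν[(A i).indicator (fun _ => (1:ℝ)) | MeasurableSpace.comap X inferInstance] = fun ω => p (X ω) :=
    fun i => exists_factor_of_stronglyMeasurable_comap (X := X)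
      (stronglyMeasurable_condExp (m := MeasurableSpace.comap X inferInstance))
  choose ψ hψmeas hψeq using hwex
  have hPT' : ∀ i : ι, ∃ h : α → ℝ, Measurable h ∧ (i ∈ I → μ (A i) ≠ 0 →
      (((fun ω => h (X ω)) =ᵐ[μ[|A i]] ((μ[|A i])[Z | MeasurableSpace.comap X inferInstance])) ∧
       ((fun ω => h (X ω)) =ᵐ[νV] (νV[Z | MeasurableSpace.comap X inferInstance])))) := by
    intro i
    by_cases hi : i ∈ I ∧ μ (A i) ≠ 0
    · obtain ⟨h, hhm, h1, h2⟩ := hPT i hi.1 hi.2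
      exact ⟨h, hhm, fun _ _ => ⟨h1, h2⟩⟩
    · exact ⟨fun _ => 0, measurable_const, fun h1 h2 => absurd ⟨h1, h2⟩ hi⟩
  choose h' hh'meas hh'spec using hPT'
  -- Claim 2 : per-piece identity
  have claim2 : ∀ i ∈ I, ν[(A i).indicator Z | MeasurableSpace.comap X inferInstance]
      =ᵐ[ν] fun ω => h' i (X ω) * ψ i (X ω) := by
    intro i hi
    by_cases hA0 : μ (A i) = 0
    · have hz1 : (A i).indicator Z =ᵐ[ν] (0 : Ω → ℝ) := by
        filter_upwards [measure_eq_zero_iff_ae_notMem.mp (hνA i hA0)] with ω hω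
        simp [Set.indicator_of_notMem hω]
      have hz2 : (A i).indicator (fun _ => (1:ℝ)) =ᵐ[ν] (0 : Ω → ℝ) := by
        filter_upwards [measure_eq_zero_iff_ae_notMem.mp (hνA i hA0)] with ω hω
        simp [Set.indicator_of_notMem hω]
      have e1 : ν[(A i).indicator Z | MeasurableSpace.comap X inferInstance] =ᵐ[ν] (0 : Ω → ℝ) :=
        (condExp_congr_ae hz1).trans (by rw [condExp_zero])
      have e2 : ν[(A i).indicator (fun _ => (1:ℝ)) | MeasurableSpace.comap X inferInstance] =ᵐ[ν] (0 : Ω → ℝ) :=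
        (condExp_congr_ae hz2).trans (by rw [condExp_zero])
      rw [hψeq i] at e2
      refine e1.trans ?_
      filter_upwards [e2] with ω hω
      have : ψ i (X ω) = 0 := hω
      simp [this]
    · have hAsub := hAU i hi
      have hspec := hh'spec i hi hA0
      haveI : IsProbabilityMeasure (μ[|A i]) := cond_isProbabilityMeasure hA0
      have hinth : Integrable (fun ω => h' i (X ω)) (μ[|A i]) :=
        integrable_condExp.congr hspec.1.symm
      have hindint : Integrable ((A i).indicator fun ω => h' i (X ω)) ν :=
        integrable_indicator_cond_of_cond (hAmeas i) hAsub hU hA0 hinth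
      have hindZint : Integrable ((A i).indicator Z) ν := hZν.indicator (hAmeas i)
      have hZAi : Integrable Z (μ[|A i]) := integrable_cond_of_integrable hZ _ hA0
      have stepa : (ν[(A i).indicator fun ω => h' i (X ω) | MeasurableSpace.comap X inferInstance])
          =ᵐ[ν] ν[(A i).indicator Z | MeasurableSpace.comap X inferInstance] := by
        refine ae_eq_condExp_of_forall_setIntegral_eq hm hindZint
          (fun s hsm hsfin => integrable_condExp.integrableOn)
          (fun s hsm hsfin => ?_)
          stronglyMeasurable_condExp.aestronglyMeasurable
        have hsmeas : MeasurableSet s := hm s hsm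
        rw [setIntegral_condExp hm hindint hsm,
          setIntegral_indicator_cond (hAmeas i) hAsub hU hA0 _ hsmeas,
          setIntegral_indicator_cond (hAmeas i) hAsub hU hA0 _ hsmeas]
        congr 1
        have hs1 : ∫ x in s, h' i (X x) ∂(μ[|A i])
            = ∫ x in s, ((μ[|A i])[Z | MeasurableSpace.comap X inferInstance]) x ∂(μ[|A i]) := by
          refine setIntegral_congr_ae hsmeas ?_
          filter_upwards [hspec.1] with ω hω _
          exact hω
        rw [hs1, setIntegral_condExp hm hZAi hsm]
      have hsm' : StronglyMeasurable[MeasurableSpace.comap X inferInstance] fun ω => h' i (X ω) :=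
        ((hh'meas i).comp (Measurable.of_comap_le le_rfl)).stronglyMeasurable
      have hmul : (A i).indicator (fun ω => h' i (X ω))
          = (fun ω => h' i (X ω)) * (A i).indicator (fun _ => (1:ℝ)) := by
        funext ω
        by_cases hω : ω ∈ A i <;>
          simp [Set.indicator_of_mem, Set.indicator_of_notMem, hω]
      have hint1 : Integrable ((A i).indicator fun _ => (1:ℝ)) ν :=
        (integrable_const _).indicator (hAmeas i)
      have stepb := condExp_mul_of_stronglyMeasurable_left (μ := ν) (m := MeasurableSpace.comap X inferInstance) hsm'
        (by rw [← hmul]; exact hindint) hint1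
      refine stepa.symm.trans ?_
      rw [hmul]
      refine stepb.trans ?_
      rw [hψeq i]
      exact Filter.EventuallyEq.rfl
  -- Claim 1 : decomposition of the conditional expectation
  have hpart : ∀ ω ∈ U, ∃ i ∈ I, ω ∈ A i := by
    intro ω hω; rw [hUdef] at hω; simpa using hω
  have hνU : ∀ᵐ ω ∂ν, ω ∈ U := cond_ae_mem hUmeas
  have hsumZ : Z =ᵐ[ν] ∑ i ∈ I, (A i).indicator Z := by
    filter_upwards [hνU] with ω hω
    rw [Finset.sum_apply]
    obtain ⟨i0, hi0I, hi0⟩ := hpart ω hω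
    rw [Finset.sum_eq_single i0]
    · rw [Set.indicator_of_mem hi0]
    · intro j hj hne
      have : ω ∉ A j := fun hmem => (Set.disjoint_left.mp (hdisj j hj i0 hi0I hne) hmem) hi0
      rw [Set.indicator_of_notMem this]
    · intro hni; exact absurd hi0I hni
  have hsum1 : (fun _ => (1:ℝ)) =ᵐ[ν] ∑ i ∈ I, (A i).indicator (fun _ => (1:ℝ)) := by
    filter_upwards [hνU] with ω hω
    rw [Finset.sum_apply]
    obtain ⟨i0, hi0I, hi0⟩ := hpart ω hω
    rw [Finset.sum_eq_single i0]
    · rw [Set.indicator_of_mem hi0]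
    · intro j hj hne
      have : ω ∉ A j := fun hmem => (Set.disjoint_left.mp (hdisj j hj i0 hi0I hne) hmem) hi0
      rw [Set.indicator_of_notMem this]
    · intro hni; exact absurd hi0I hni
  have hintind : ∀ i ∈ I, Integrable ((A i).indicator Z) ν :=
    fun i hi => hZν.indicator (hAmeas i)
  have claim1 : ν[Z | MeasurableSpace.comap X inferInstance] =ᵐ[ν] ∑ i ∈ I, ν[(A i).indicator Z | MeasurableSpace.comap X inferInstance] :=
    (condExp_congr_ae hsumZ).trans (condExp_finset_sum hintind _)
  have Emain : ν[Z | MeasurableSpace.comap X inferInstance] =ᵐ[ν] fun ω => ∑ i ∈ I, h' i (X ω) * ψ i (X ω) := by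
    have hall : ∀ᵐ ω ∂ν, ∀ i ∈ I, (ν[(A i).indicator Z | MeasurableSpace.comap X inferInstance]) ω = h' i (X ω) * ψ i (X ω) :=
      (ae_ball_iff I.countable_toSet).mpr claim2
    filter_upwards [claim1, hall] with ω h1 h2
    rw [h1, Finset.sum_apply]
    exact Finset.sum_congr rfl fun i hi => h2 i hi
  have Eone : (fun ω => ∑ i ∈ I, ψ i (X ω)) =ᵐ[ν] fun _ => (1:ℝ) := by
    have hintind1 : ∀ i ∈ I, Integrable ((A i).indicator fun _ => (1:ℝ)) ν :=
      fun i hi => (integrable_const _).indicator (hAmeas i)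
    have e2 := condExp_finset_sum (μ := ν) (m := MeasurableSpace.comap X inferInstance)
      (f := fun i => (A i).indicator fun _ => (1:ℝ)) hintind1
    have e3 : ν[fun _ : Ω => (1:ℝ) | MeasurableSpace.comap X inferInstance]
        = fun _ => (1:ℝ) := condExp_const (μ := ν) hm (1:ℝ)
    have e0 : (fun ω => ∑ i ∈ I, ψ i (X ω))
        = ∑ i ∈ I, ν[(A i).indicator fun _ => (1:ℝ) | MeasurableSpace.comap X inferInstance] := by
      funext ω
      rw [Finset.sum_apply]
      exact Finset.sum_congr rfl fun i _ => (congrFun (hψeq i) ω).symm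
    rw [e0]
    exact e2.symm.trans ((condExp_congr_ae hsum1.symm).trans (Filter.EventuallyEq.of_eq e3))
  have Ezero : ∀ i ∈ I, μ (A i) = 0 → (fun ω => ψ i (X ω)) =ᵐ[ν] fun _ => (0:ℝ) := by
    intro i hi hA0
    have hz2 : (A i).indicator (fun _ => (1:ℝ)) =ᵐ[ν] (0 : Ω → ℝ) := by
      filter_upwards [measure_eq_zero_iff_ae_notMem.mp (hνA i hA0)] with ω hω
      simp [Set.indicator_of_notMem hω]
    have e2 : ν[(A i).indicator (fun _ => (1:ℝ)) | MeasurableSpace.comap X inferInstance] =ᵐ[ν] (0 : Ω → ℝ) :=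
      (condExp_congr_ae hz2).trans (by rw [condExp_zero])
    rw [hψeq i] at e2
    exact e2
  have EV : ∀ i ∈ I, μ (A i) ≠ 0 → (fun ω => h' i (X ω)) =ᵐ[νV] fun ω => φV (X ω) := by
    intro i hi h0
    have h2 := (hh'spec i hi h0).2
    rw [hφVeq] at h2
    exact h2
  -- transfer to the pushforward measures
  set ρ : Measure α := ν.map X with hρdef
  set ρV : Measure α := νV.map X with hρVdef
  haveI : IsProbabilityMeasure ρ := Measure.isProbabilityMeasure_map hX.aemeasurable
  haveI : IsProbabilityMeasure ρV := Measure.isProbabilityMeasure_map hX.aemeasurable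
  have hmap : ∀ (μ' : Measure Ω) (F G : α → ℝ), Measurable F → Measurable G →
      ((fun ω => F (X ω)) =ᵐ[μ'] fun ω => G (X ω)) → F =ᵐ[μ'.map X] G := by
    intro μ' F G hF hG hFG
    rw [Filter.EventuallyEq, ae_map_iff hX.aemeasurable (measurableSet_eq_fun hF hG)]
    exact hFG
  have hsummeas : Measurable fun x => ∑ i ∈ I, h' i x * ψ i x :=
    Finset.measurable_sum _ fun i _ => (hh'meas i).mul (hψmeas i)
  have E1ρ : φU =ᵐ[ρ] fun x => ∑ i ∈ I, h' i x * ψ i x := by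
    refine hmap ν φU _ hφU hsummeas ?_
    have h1 := Emain
    rw [hφUeq] at h1
    exact h1
  have E2ρ : (fun x => ∑ i ∈ I, ψ i x) =ᵐ[ρ] fun _ => (1:ℝ) := by
    refine hmap ν _ _ (Finset.measurable_sum _ fun i _ => hψmeas i) measurable_const ?_
    exact Eone
  have E0ρ : ∀ i ∈ I, μ (A i) = 0 → ψ i =ᵐ[ρ] fun _ => (0:ℝ) := by
    intro i hi h0
    exact hmap ν _ _ (hψmeas i) measurable_const (Ezero i hi h0)
  have EVρ : ∀ i ∈ I, μ (A i) ≠ 0 → h' i =ᵐ[ρV] φV := by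
    intro i hi h0
    exact hmap νV _ _ (hh'meas i) hφV (EV i hi h0)
  -- Lebesgue decomposition of ρV with respect to ρ
  obtain ⟨S, hSmeas, hS1, hS2⟩ := Measure.mutuallySingular_singularPart ρV ρ
  have hac : ρV.restrict S ≪ ρ := by
    refine Measure.AbsolutelyContinuous.mk fun N hN hρN => ?_
    rw [Measure.restrict_apply hN]
    have hdec : ρV (N ∩ S) = ρV.singularPart ρ (N ∩ S)
        + ρ.withDensity (ρV.rnDeriv ρ) (N ∩ S) := by
      conv_lhs => rw [ρV.haveLebesgueDecomposition_add ρ]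
      simp [Measure.add_apply]
    have h1 : ρV.singularPart ρ (N ∩ S) = 0 :=
      measure_mono_null Set.inter_subset_right hS1
    have h2 : ρ.withDensity (ρV.rnDeriv ρ) (N ∩ S) = 0 :=
      measure_mono_null Set.inter_subset_left ((withDensity_absolutelyContinuous ρ _) hρN)
    rw [hdec, h1, h2, add_zero]
  -- the final function
  refine ⟨S.piecewise φU φV, Measurable.piecewise hSmeas hφU hφV, ?_, ?_⟩
  · have hXS : ∀ᵐ ω ∂ν, X ω ∈ S := by
      rw [ae_iff]
      have heq : {ω | ¬ X ω ∈ S} = X ⁻¹' Sᶜ := rfl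
      rw [heq, ← Measure.map_apply hX hSmeas.compl]
      exact hS2
    filter_upwards [hXS] with ω hω
    rw [Set.piecewise_eq_of_mem _ _ _ hω]
    exact (congrFun hφUeq ω).symm
  · have hres : φU =ᵐ[ρV.restrict S] φV := by
      have hE1 : φU =ᵐ[ρV.restrict S] fun x => ∑ i ∈ I, h' i x * ψ i x := hac.ae_eq E1ρ
      have hE2 : (fun x => ∑ i ∈ I, ψ i x) =ᵐ[ρV.restrict S] fun _ => (1:ℝ) := hac.ae_eq E2ρ
      have hE0 : ∀ᵐ x ∂(ρV.restrict S), ∀ i ∈ I, μ (A i) = 0 → ψ i x = 0 := by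
        refine (ae_ball_iff I.countable_toSet).mpr fun i hi => ?_
        by_cases h0 : μ (A i) = 0
        · filter_upwards [hac.ae_eq (E0ρ i hi h0)] with x hx _
          exact hx
        · filter_upwards with x hx
          exact absurd hx h0
      have hEV : ∀ᵐ x ∂(ρV.restrict S), ∀ i ∈ I, μ (A i) ≠ 0 → h' i x = φV x := by
        refine ae_restrict_of_ae ?_
        refine (ae_ball_iff I.countable_toSet).mpr fun i hi => ?_
        by_cases h0 : μ (A i) = 0
        · filter_upwards with x hx
          exact absurd h0 hx
        · filter_upwards [EVρ i hi h0] with x hx _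
          exact hx
      filter_upwards [hE1, hE2, hE0, hEV] with x h1 h2 h0 hv
      rw [h1]
      have : ∀ i ∈ I, h' i x * ψ i x = φV x * ψ i x := by
        intro i hi
        by_cases hA0 : μ (A i) = 0
        · rw [h0 i hi hA0, mul_zero, mul_zero]
        · rw [hv i hi hA0]
      rw [Finset.sum_congr rfl this, ← Finset.mul_sum]
      have h2' : ∑ i ∈ I, ψ i x = 1 := h2
      rw [h2', mul_one]
    set B : Set α := S ∩ {x | φU x = φV x}ᶜ with hBdef
    have hBmeas : MeasurableSet B := hSmeas.inter ((measurableSet_eq_fun hφU hφV).compl)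
    have hBzero : ρV B = 0 := by
      have h1 : ρV.restrict S {x | φU x = φV x}ᶜ = 0 := ae_iff.mp hres
      calc ρV B = ρV.restrict S {x | φU x = φV x}ᶜ := by
            rw [Measure.restrict_apply (measurableSet_eq_fun hφU hφV).compl, Set.inter_comm]
        _ = 0 := h1
    have hXB : ∀ᵐ ω ∂νV, X ω ∉ B := by
      rw [ae_iff]
      have heq : {ω | ¬ X ω ∉ B} = X ⁻¹' B := by ext ω; simp
      rw [heq, ← Measure.map_apply hX hBmeas]
      exact hBzero
    filter_upwards [hXB] with ω hω
    by_cases hmem : X ω ∈ S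
    · have heq : φU (X ω) = φV (X ω) := by
        by_contra hne
        exact hω ⟨hmem, hne⟩
      rw [Set.piecewise_eq_of_mem _ _ _ hmem, heq]
      exact (congrFun hφVeq ω).symm
    · rw [Set.piecewise_eq_of_notMem _ _ _ hmem]
      exact (congrFun hφVeq ω).symm

end Key

end AuxCombine

section CohortFinset
open TwoEventDiD

lemma cohort_finset (T : ℕ) :
    (∀ a : ℕ∞, InCohort T a → a ∈ insert ⊤ ((Finset.Icc 2 T).image (Nat.cast : ℕ → ℕ∞)))
    ∧ (∀ a ∈ insert ⊤ ((Finset.Icc 2 T).image (Nat.cast : ℕ → ℕ∞)), InCohort T a) := by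
  constructor
  · intro a ha
    rcases ha with rfl | ⟨h2, hT'⟩
    · exact Finset.mem_insert_self _ _
    · have hne : a ≠ ⊤ := by
        intro h
        rw [h] at hT'
        exact absurd hT' (by simp)
      lift a to ℕ using hne with n
      refine Finset.mem_insert_of_mem (Finset.mem_image.mpr ⟨n, ?_, rfl⟩)
      rw [Finset.mem_Icc]
      exact ⟨by exact_mod_cast h2, by exact_mod_cast hT'⟩
  · intro a ha
    rcases Finset.mem_insert.mp ha with rfl | hmem
    · exact Or.inl rfl
    · obtain ⟨n, hn, rfl⟩ := Finset.mem_image.mp hmem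
      rw [Finset.mem_Icc] at hn
      exact Or.inr ⟨by exact_mod_cast hn.1, by exact_mod_cast hn.2⟩

end CohortFinset


/-- Lemma 1, part CS4: conditional never-treated parallel trends for the
two events imply single-event never-treated parallel trends for the combined event. -/
theorem combined_event_parallel_trends_never_treated
    {Ω : Type*} [MeasurableSpace Ω] (μ : Measure Ω) [IsProbabilityMeasure μ]
    (T : ℕ) (hT : 2 ≤ T)
    (G1 G2 : Ω → ℕ∞) (Y : ℕ → ℕ∞ → ℕ∞ → Ω → ℝ)
    (hG1mem : ∀ ω, InCohort T (G1 ω)) (hG2mem : ∀ ω, InCohort T (G2 ω))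
    (hmG1 : ∀ g : ℕ∞, MeasurableSet {ω | G1 ω = g})
    (hmG2 : ∀ g : ℕ∞, MeasurableSet {ω | G2 ω = g})
    (hYint : ∀ (t : ℕ) (g1 g2 : ℕ∞), Integrable (Y t g1 g2) μ)
    (hYtop1 : ∀ (t : ℕ) (g2 : ℕ∞), Y t ⊤ g2 = Y t 0 g2)
    (hYtop2 : ∀ (t : ℕ) (g1 : ℕ∞), Y t g1 ⊤ = Y t g1 0)
    {K : ℕ} (X : Ω → Fin K → ℝ) (hX : Measurable X)
    (hPT : CondPTNever μ G1 G2 Y T X) :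
    ∀ g : ℕ, 2 ≤ g → g ≤ T →
      0 < μ {ω | min (G1 ω) (G2 ω) = (g : ℕ∞)} →
      0 < μ {ω | min (G1 ω) (G2 ω) = (⊤ : ℕ∞)} →
      ∀ t : ℕ, g ≤ t → t ≤ T →
        ∃ h : (Fin K → ℝ) → ℝ, Measurable h ∧
          (fun ω => h (X ω))
            =ᵐ[μ[|{ω | min (G1 ω) (G2 ω) = (g : ℕ∞)}]]
            (μ[|{ω | min (G1 ω) (G2 ω) = (g : ℕ∞)}])[
              fun ω => Y t 0 0 ω - Y (t - 1) 0 0 ω | mX X] ∧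
          (fun ω => h (X ω))
            =ᵐ[μ[|{ω | min (G1 ω) (G2 ω) = (⊤ : ℕ∞)}]]
            (μ[|{ω | min (G1 ω) (G2 ω) = (⊤ : ℕ∞)}])[
              fun ω => Y t 0 0 ω - Y (t - 1) 0 0 ω | mX X] := by
  
  intro g hg2 hgT hUpos hVpos t hgt htT
  classical
  have hVeq : {ω | min (G1 ω) (G2 ω) = (⊤ : ℕ∞)} = {ω | G1 ω = ⊤ ∧ G2 ω = ⊤} := by
    ext ω; simp [min_eq_top]
  rw [hVeq] at hVpos ⊢
  obtain ⟨hCmem, hCin⟩ := cohort_finset T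
  set C : Finset ℕ∞ := insert ⊤ ((Finset.Icc 2 T).image (Nat.cast : ℕ → ℕ∞)) with hC
  set I : Finset (ℕ∞ × ℕ∞) := (C ×ˢ C).filter (fun p => min p.1 p.2 = (g:ℕ∞)) with hI
  set A : ℕ∞ × ℕ∞ → Set Ω := fun p => {ω | G1 ω = p.1 ∧ G2 ω = p.2} with hA
  have hAmeas : ∀ p, MeasurableSet (A p) := fun p => (hmG1 p.1).inter (hmG2 p.2)
  have hgne : ((g : ℕ∞)) ≠ ⊤ := by simp
  have hUdef : {ω | min (G1 ω) (G2 ω) = (g:ℕ∞)} = ⋃ p ∈ I, A p := by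
    ext ω
    simp only [Set.mem_setOf_eq, Set.mem_iUnion]
    constructor
    · intro hmin
      refine ⟨(G1 ω, G2 ω), ?_, rfl, rfl⟩
      rw [hI, Finset.mem_filter, Finset.mem_product]
      exact ⟨⟨hCmem _ (hG1mem ω), hCmem _ (hG2mem ω)⟩, hmin⟩
    · rintro ⟨p, hpI, h1, h2⟩
      rw [hI, Finset.mem_filter] at hpI
      rw [h1, h2]
      exact hpI.2
  have hdisj : ∀ p ∈ I, ∀ q ∈ I, p ≠ q → Disjoint (A p) (A q) := by
    intro p _ q _ hpq
    rw [Set.disjoint_left]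
    intro ω hp hq
    exact hpq (Prod.ext (hp.1.symm.trans hq.1) (hp.2.symm.trans hq.2))
  have hPT' : ∀ p ∈ I, μ (A p) ≠ 0 → ∃ h : (Fin K → ℝ) → ℝ, Measurable h ∧
      ((fun ω => h (X ω)) =ᵐ[μ[|A p]]
        ((μ[|A p])[(fun ω => Y t 0 0 ω - Y (t-1) 0 0 ω) |
          MeasurableSpace.comap X inferInstance])) ∧
      ((fun ω => h (X ω)) =ᵐ[μ[|{ω | G1 ω = ⊤ ∧ G2 ω = ⊤}]]
        ((μ[|{ω | G1 ω = ⊤ ∧ G2 ω = ⊤}])[(fun ω => Y t 0 0 ω - Y (t-1) 0 0 ω) |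
          MeasurableSpace.comap X inferInstance])) := by
    intro p hpI hp0
    rw [hI, Finset.mem_filter, Finset.mem_product] at hpI
    obtain ⟨⟨hp1C, hp2C⟩, hpmin⟩ := hpI
    have h1 := hCin p.1 hp1C
    have h2 := hCin p.2 hp2C
    have hnotboth : ¬(p.1 = ⊤ ∧ p.2 = ⊤) := by
      rintro ⟨ha, hb⟩
      rw [ha, hb] at hpmin
      exact hgne (by simpa using hpmin.symm)
    have hpos : 0 < μ {ω | G1 ω = p.1 ∧ G2 ω = p.2} := pos_iff_ne_zero.mpr hp0
    have hmin_le : min p.1 p.2 ≤ (t : ℕ∞) := by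
      rw [hpmin]
      exact_mod_cast Nat.cast_le.mpr hgt
    obtain ⟨h, hmeas, ha, hb⟩ := hPT p.1 p.2 h1 h2 hnotboth hpos hVpos t hmin_le htT
    exact ⟨h, hmeas, ha, hb⟩
  exact combine_PT μ X hX (fun ω => Y t 0 0 ω - Y (t-1) 0 0 ω)
    ((hYint t 0 0).sub (hYint (t-1) 0 0)) I A hAmeas
    {ω | G1 ω = ⊤ ∧ G2 ω = ⊤} (ne_of_gt hVpos)
    {ω | min (G1 ω) (G2 ω) = (g:ℕ∞)} hUdef (ne_of_gt hUpos) hdisj hPT'
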